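/- Fix h > 0, σ > 0, x ∈ ℝ and θ > 0. For the θ-method applied to dX = −γX dt + σ dW, one step from X_0 = x gives E(X_1²) = A_θ(−γh)² x² + B_θ(−γh)² σ² h with A_θ(z) = (1+(1−θ)z)/(1−θz) and B_θ(z) = 1/(1−θz). Then lim_{γ→+∞} E(X_1²) = ((θ−1)/θ)² x², and this limit equals 0 for every x ∈ ℝ if and only if θ = 1. Hence, among the θ-methods with θ > 0, exactly the implicit Euler method θ = 1 is L-stable. -/

import Mathlib

open MeasureTheory ProbabilityTheory Filter Topology

open scoped Real
open scoped NNReal ENNReal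

lemma hasDerivAt_negexp (x : ℝ) :
    HasDerivAt (fun x : ℝ => -Real.exp (-(2⁻¹:ℝ) * x ^ 2))
      (x * Real.exp (-(2⁻¹:ℝ) * x ^ 2)) x := by
  have h1 : HasDerivAt (fun x : ℝ => -(2⁻¹:ℝ) * x ^ 2) (-(2⁻¹:ℝ) * (2 * x ^ 1)) x :=
    (hasDerivAt_pow 2 x).const_mul (-(2⁻¹:ℝ))
  have := h1.exp.neg
  refine this.congr_deriv ?_
  ring

lemma integrable_m1 : Integrable fun x : ℝ => x * Real.exp (-(2⁻¹:ℝ) * x ^ 2) :=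
  integrable_mul_exp_neg_mul_sq (by norm_num)

lemma integrable_m2 : Integrable fun x : ℝ => x ^ 2 * Real.exp (-(2⁻¹:ℝ) * x ^ 2) := by
  have h := integrable_rpow_mul_exp_neg_mul_sq (b := 2⁻¹) (by norm_num) (s := 2) (by norm_num)
  have h2 : ∀ x : ℝ, x ^ (2:ℝ) = x ^ 2 := fun x => by
    rw [show (2:ℝ) = ((2:ℕ):ℝ) by norm_num, Real.rpow_natCast]
  simpa only [h2] using h

lemma moment1 : ∫ x : ℝ, x * Real.exp (-(2⁻¹:ℝ) * x ^ 2) = 0 :=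
  integral_eq_zero_of_hasDerivAt_of_integrable hasDerivAt_negexp integrable_m1
    ((integrable_exp_neg_mul_sq (by norm_num : (0:ℝ) < 2⁻¹)).neg)

lemma moment2 : ∫ x : ℝ, x ^ 2 * Real.exp (-(2⁻¹:ℝ) * x ^ 2) = Real.sqrt (2 * π) := by
  have hu : ∀ x : ℝ, HasDerivAt (fun y : ℝ => y) ((fun _ : ℝ => (1:ℝ)) x) x :=
    fun x => hasDerivAt_id x
  have key := integral_mul_deriv_eq_deriv_mul_of_integrable (u := fun y : ℝ => y)
    (u' := fun _ => (1:ℝ)) (v := fun x : ℝ => -Real.exp (-(2⁻¹:ℝ) * x ^ 2))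
    (v' := fun x : ℝ => x * Real.exp (-(2⁻¹:ℝ) * x ^ 2))
    (fun x _ => hu x) (fun x _ => hasDerivAt_negexp x)
    (by
      have e : ((fun y : ℝ => y) * fun x : ℝ => x * Real.exp (-(2⁻¹:ℝ) * x ^ 2))
          = fun x : ℝ => x ^ 2 * Real.exp (-(2⁻¹:ℝ) * x ^ 2) := by
        funext x; simp [Pi.mul_apply]; ring
      rw [e]; exact integrable_m2)
    (by
      have e : ((fun _ : ℝ => (1:ℝ)) * fun x : ℝ => -Real.exp (-(2⁻¹:ℝ) * x ^ 2))
          = fun x : ℝ => -Real.exp (-(2⁻¹:ℝ) * x ^ 2) := by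
        funext x; simp [Pi.mul_apply]
      rw [e]
      exact (integrable_exp_neg_mul_sq (by norm_num : (0:ℝ) < 2⁻¹)).neg)
    (by
      have e : ((fun y : ℝ => y) * fun x : ℝ => -Real.exp (-(2⁻¹:ℝ) * x ^ 2))
          = fun x : ℝ => -(x * Real.exp (-(2⁻¹:ℝ) * x ^ 2)) := by
        funext x; simp [Pi.mul_apply]
      rw [e]; exact integrable_m1.neg)
  have h2 : ∫ x : ℝ, Real.exp (-(2⁻¹:ℝ) * x ^ 2) = Real.sqrt (2 * π) := by
    rw [integral_gaussian (2⁻¹ : ℝ), show (π:ℝ) / 2⁻¹ = 2 * π by ring]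
  calc ∫ x : ℝ, x ^ 2 * Real.exp (-(2⁻¹:ℝ) * x ^ 2)
      = ∫ x : ℝ, x * (x * Real.exp (-(2⁻¹:ℝ) * x ^ 2)) := by
        congr 1; ext x; ring
    _ = - ∫ x : ℝ, (1:ℝ) * -Real.exp (-(2⁻¹:ℝ) * x ^ 2) := key
    _ = ∫ x : ℝ, Real.exp (-(2⁻¹:ℝ) * x ^ 2) := by
        rw [← integral_neg]; congr 1; ext x; ring
    _ = Real.sqrt (2 * π) := h2

lemma pdf_eq (x : ℝ) : gaussianPDFReal 0 1 x
    = (Real.sqrt (2 * π))⁻¹ * Real.exp (-(2⁻¹:ℝ) * x ^ 2) := by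
  simp only [gaussianPDFReal, NNReal.coe_one, mul_one, sub_zero]
  ring_nf

lemma integral_pdf : ∫ x : ℝ, gaussianPDFReal 0 1 x = 1 :=
  integral_gaussianPDFReal_eq_one 0 one_ne_zero

lemma gaussian_affine_sq (a c : ℝ) :
    ∫ y, (a + c * y) ^ 2 ∂(gaussianReal 0 1) = a ^ 2 + c ^ 2 := by
  have hC : (0:ℝ) < Real.sqrt (2 * π) := Real.sqrt_pos.mpr (by positivity)
  set C : ℝ := (Real.sqrt (2 * π))⁻¹ with hCdef
  rw [gaussianReal_of_var_ne_zero 0 one_ne_zero]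
  have hmeasf : Measurable fun x : ℝ => Real.toNNReal (gaussianPDFReal 0 1 x) :=
    (measurable_gaussianPDFReal 0 1).real_toNNReal
  have : (gaussianPDF 0 1) = fun x => ((Real.toNNReal (gaussianPDFReal 0 1 x) : ℝ≥0) : ℝ≥0∞) :=
    rfl
  rw [this, integral_withDensity_eq_integral_smul hmeasf]
  have heq : ∀ x : ℝ, (Real.toNNReal (gaussianPDFReal 0 1 x) : ℝ≥0) • (a + c * x) ^ 2
      = a ^ 2 * gaussianPDFReal 0 1 x + (2 * a * c) * (x * gaussianPDFReal 0 1 x)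
        + c ^ 2 * (x ^ 2 * gaussianPDFReal 0 1 x) := by
    intro x
    rw [NNReal.smul_def, Real.coe_toNNReal _ (gaussianPDFReal_nonneg 0 1 x), smul_eq_mul]
    ring
  have hint0 : Integrable (gaussianPDFReal 0 1) := integrable_gaussianPDFReal 0 1
  have hint1 : Integrable fun x : ℝ => x * gaussianPDFReal 0 1 x := by
    have := integrable_m1.const_mul C
    apply this.congr
    · filter_upwards with x
      rw [pdf_eq]; ring
  have hint2 : Integrable fun x : ℝ => x ^ 2 * gaussianPDFReal 0 1 x := by
    have := integrable_m2.const_mul C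
    apply this.congr
    · filter_upwards with x
      rw [pdf_eq]; ring
  have hm1 : ∫ x : ℝ, x * gaussianPDFReal 0 1 x = 0 := by
    calc ∫ x : ℝ, x * gaussianPDFReal 0 1 x
        = ∫ x : ℝ, C * (x * Real.exp (-(2⁻¹:ℝ) * x ^ 2)) := by
          congr 1; ext x; rw [pdf_eq]; ring
      _ = C * ∫ x : ℝ, x * Real.exp (-(2⁻¹:ℝ) * x ^ 2) := integral_const_mul _ _
      _ = 0 := by rw [moment1, mul_zero]
  have hm2 : ∫ x : ℝ, x ^ 2 * gaussianPDFReal 0 1 x = 1 := by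
    calc ∫ x : ℝ, x ^ 2 * gaussianPDFReal 0 1 x
        = ∫ x : ℝ, C * (x ^ 2 * Real.exp (-(2⁻¹:ℝ) * x ^ 2)) := by
          congr 1; ext x; rw [pdf_eq]; ring
      _ = C * ∫ x : ℝ, x ^ 2 * Real.exp (-(2⁻¹:ℝ) * x ^ 2) := integral_const_mul _ _
      _ = 1 := by rw [moment2, hCdef, inv_mul_cancel₀ hC.ne']
  calc ∫ x : ℝ, (Real.toNNReal (gaussianPDFReal 0 1 x) : ℝ≥0) • (a + c * x) ^ 2
      = ∫ x : ℝ, (a ^ 2 * gaussianPDFReal 0 1 x + (2 * a * c) * (x * gaussianPDFReal 0 1 x)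
        + c ^ 2 * (x ^ 2 * gaussianPDFReal 0 1 x)) := by
        congr 1; ext x; exact heq x
    _ = a ^ 2 * (∫ x : ℝ, gaussianPDFReal 0 1 x)
        + (2 * a * c) * (∫ x : ℝ, x * gaussianPDFReal 0 1 x)
        + c ^ 2 * (∫ x : ℝ, x ^ 2 * gaussianPDFReal 0 1 x) := by
        have h12 : Integrable (fun x : ℝ => a ^ 2 * gaussianPDFReal 0 1 x
            + (2 * a * c) * (x * gaussianPDFReal 0 1 x)) :=
          (hint0.const_mul _).add (hint1.const_mul _)
        rw [integral_add h12 (hint2.const_mul _),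
          integral_add (hint0.const_mul _) (hint1.const_mul _),
          integral_const_mul, integral_const_mul, integral_const_mul]
    _ = a ^ 2 + c ^ 2 := by rw [integral_pdf, hm1, hm2]; ring

/-- Fix `h > 0`, `σ > 0` and `θ > 0`.  For the θ-method applied to
`dX = -γX dt + σ dW`, one step from `X_0 = x` gives
`E(X_1²) = A_θ(-γh)² x² + B_θ(-γh)² σ² h` with `A_θ(z) = (1+(1-θ)z)/(1-θz)` and
`B_θ(z) = 1/(1-θz)`.  Then `lim_{γ→+∞} E(X_1²) = ((θ-1)/θ)² x²`, and this limit vanishes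
for every `x` iff `θ = 1`: among the θ-methods with `θ > 0`, exactly the implicit Euler
method is L-stable. -/
theorem theta_method_L_stability_iff
    {Ω : Type*} [MeasurableSpace Ω] (μ : Measure Ω) [IsProbabilityMeasure μ]
    (ξ₀ : Ω → ℝ) (hmeas : Measurable ξ₀) (hgauss : μ.map ξ₀ = gaussianReal 0 1)
    (h σ θ : ℝ) (hh : 0 < h) (hσ : 0 < σ) (hθ : 0 < θ)
    (A B : ℝ → ℝ)
    (hA : ∀ z, A z = (1 + (1 - θ) * z) / (1 - θ * z))
    (hB : ∀ z, B z = 1 / (1 - θ * z))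
    (X₁ : ℝ → ℝ → Ω → ℝ)
    (hX₁ : ∀ x γ ω, X₁ x γ ω = A (-γ * h) * x + B (-γ * h) * Real.sqrt h * σ * ξ₀ ω) :
    (∀ x γ : ℝ, 0 < γ →
        ∫ ω, (X₁ x γ ω) ^ 2 ∂μ = (A (-γ * h)) ^ 2 * x ^ 2 + (B (-γ * h)) ^ 2 * σ ^ 2 * h)
      ∧ (∀ x : ℝ, Tendsto (fun γ => ∫ ω, (X₁ x γ ω) ^ 2 ∂μ) atTop
          (𝓝 (((θ - 1) / θ) ^ 2 * x ^ 2)))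
      ∧ ((∀ x : ℝ, ((θ - 1) / θ) ^ 2 * x ^ 2 = 0) ↔ θ = 1) := by
  -- general one-step second moment formula
  have key : ∀ x γ : ℝ, ∫ ω, (X₁ x γ ω) ^ 2 ∂μ
      = (A (-γ * h)) ^ 2 * x ^ 2 + (B (-γ * h)) ^ 2 * σ ^ 2 * h := by
    intro x γ
    set a := A (-γ * h) * x with ha
    set c := B (-γ * h) * Real.sqrt h * σ with hc
    have h1 : ∫ ω, (X₁ x γ ω) ^ 2 ∂μ = ∫ ω, (a + c * ξ₀ ω) ^ 2 ∂μ := by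
      congr 1; funext ω; rw [hX₁]
    have h2 : ∫ ω, (a + c * ξ₀ ω) ^ 2 ∂μ = ∫ y, (a + c * y) ^ 2 ∂(gaussianReal 0 1) := by
      rw [← hgauss, integral_map hmeas.aemeasurable]
      exact (Continuous.aestronglyMeasurable (by continuity))
    rw [h1, h2, gaussian_affine_sq]
    have hsq : Real.sqrt h ^ 2 = h := Real.sq_sqrt hh.le
    rw [ha, hc]
    nlinarith [hsq]
  have hθh : (0:ℝ) < θ * h := mul_pos hθ hh
  -- limits of the coefficients
  have hAlim : Tendsto (fun γ : ℝ => A (-γ * h)) atTop (𝓝 ((θ - 1) / θ)) := by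
    have hbase : Tendsto (fun γ : ℝ => (γ⁻¹ - (1 - θ) * h) / (γ⁻¹ + θ * h)) atTop
        (𝓝 ((0 - (1 - θ) * h) / (0 + θ * h))) :=
      Tendsto.div ((tendsto_inv_atTop_zero).sub tendsto_const_nhds)
        ((tendsto_inv_atTop_zero).add tendsto_const_nhds) (by simpa using hθh.ne')
    have hval : (0 - (1 - θ) * h) / (0 + θ * h) = (θ - 1) / θ := by
      rw [zero_sub, zero_add]
      field_simp
      ring
    rw [hval] at hbase
    refine hbase.congr' ?_
    filter_upwards [eventually_gt_atTop (0:ℝ)] with γ hγ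
    rw [hA]
    rw [div_eq_div_iff]
    · field_simp
      ring
    · positivity
    · have : 1 - θ * (-γ * h) = 1 + θ * (γ * h) := by ring
      rw [this]; positivity
  have hBlim : Tendsto (fun γ : ℝ => B (-γ * h)) atTop (𝓝 0) := by
    have hdiv : Tendsto (fun γ : ℝ => 1 - θ * (-γ * h)) atTop atTop := by
      have : Tendsto (fun γ : ℝ => (θ * h) * γ) atTop atTop :=
        Tendsto.const_mul_atTop hθh tendsto_id
      apply Tendsto.congr' _ (tendsto_atTop_add_const_left atTop 1 this)
      filter_upwards with γ; ring
    have := hdiv.inv_tendsto_atTop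
    refine this.congr' ?_
    filter_upwards with γ
    rw [hB, one_div]
    rfl
  refine ⟨fun x γ _ => key x γ, fun x => ?_, ?_⟩
  · have : Tendsto (fun γ : ℝ => (A (-γ * h)) ^ 2 * x ^ 2 + (B (-γ * h)) ^ 2 * σ ^ 2 * h)
        atTop (𝓝 (((θ - 1) / θ) ^ 2 * x ^ 2 + 0 ^ 2 * σ ^ 2 * h)) :=
      (((hAlim.pow 2).mul_const _)).add (((hBlim.pow 2).mul_const _).mul_const _)
    simp only [ne_eq, OfNat.ofNat_ne_zero, not_false_eq_true, zero_pow, zero_mul,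
      add_zero] at this
    exact Tendsto.congr (fun γ => (key x γ).symm) this
  · constructor
    · intro H
      have h1 := H 1
      have h2 : ((θ - 1) / θ) ^ 2 = 0 := by simpa using h1
      have h3 : (θ - 1) / θ = 0 := by
        nlinarith [sq_nonneg ((θ - 1) / θ), sq_abs ((θ - 1) / θ), abs_nonneg ((θ - 1) / θ)]
      rcases div_eq_zero_iff.mp h3 with h4 | h4
      · linarith
      · exact absurd h4 hθ.ne'
    · intro hθ1 x
      rw [hθ1]
      simp
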